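/- arXiv:1307.4281 — 2 statements merged into one kernel-verified Lean document; each statement's English description precedes it below -/
import Mathlib

section
/- Let A be an n×n matrix over ℍ and b ∈ ℍ. For every j ∈ {1,…,n}, the j-th column determinant of the matrix obtained from A by replacing its j-th column a_{.j} with the right scalar multiple a_{.j}·b equals cdet_j A · b; that is, cdet_j A_{.j}(a_{.j}·b) = (cdet_j A)·b. -/
open Quaternion Matrix Finset

noncomputable section

/-- Ordered product of the entries of `A` along the cycle of `σ` containing `x`,
starting at `x`:  `a_{x,σx} · a_{σx,σ²x} ⋯ a_{σ^{c-1}x,x}`. -/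
def cycProd {n : ℕ} (A : Matrix (Fin n) (Fin n) ℍ[ℝ]) (σ : Equiv.Perm (Fin n))
    (x : Fin n) : ℍ[ℝ] :=
  ((List.range (Function.minimalPeriod (⇑σ) x)).map
    (fun t => A ((⇑σ)^[t] x) ((⇑σ)^[t + 1] x))).prod

/-- `x` is the smallest element of its `σ`-cycle. -/
def isLeaderB {n : ℕ} (σ : Equiv.Perm (Fin n)) (x : Fin n) : Bool :=
  (List.range n).all fun t => decide (x ≤ (⇑σ)^[t] x)

/-- `x` lies in the `σ`-cycle of `i`. -/
def inCycleB {n : ℕ} (σ : Equiv.Perm (Fin n)) (i x : Fin n) : Bool :=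
  (List.range n).any fun t => decide ((⇑σ)^[t] i = x)

/-- The increasing list of the smallest elements of the `σ`-cycles other than
the cycle of `i`. -/
def leaders {n : ℕ} (σ : Equiv.Perm (Fin n)) (i : Fin n) : List (Fin n) :=
  (List.finRange n).filter fun x => isLeaderB σ x && !(inCycleB σ i x)

/-- The `i`-th row determinant of a quaternion matrix: the sum over all
permutations, written in left-ordered cycle notation (the cycle of `i` first,
starting with `i`; every other cycle starting with its smallest element, these
smallest elements increasing from left to right), of the sign times the ordered
product of the corresponding entries. -/
def rdet {n : ℕ} (A : Matrix (Fin n) (Fin n) ℍ[ℝ]) (i : Fin n) : ℍ[ℝ] :=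
  ∑ σ : Equiv.Perm (Fin n),
    ((Equiv.Perm.sign σ : ℤ) : ℍ[ℝ]) *
      (cycProd A σ i * ((leaders σ i).map (cycProd A σ)).prod)

/-- The `j`-th column determinant of a quaternion matrix: the sum over all
permutations, written in right-ordered cycle notation (the cycle of `j` last,
ending with `j`; every other cycle ending with its smallest element, these
smallest elements increasing from right to left), of the sign times the ordered
product of the corresponding entries. -/
def cdet {n : ℕ} (A : Matrix (Fin n) (Fin n) ℍ[ℝ]) (j : Fin n) : ℍ[ℝ] :=
  ∑ τ : Equiv.Perm (Fin n),
    ((Equiv.Perm.sign τ : ℤ) : ℍ[ℝ]) *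
      ((((leaders τ j).reverse).map (cycProd A τ)).prod * cycProd A τ j)

/-- The determinant of a (Hermitian) quaternion matrix: the common value of all
row and column determinants. -/
def Hdet : {m : ℕ} → Matrix (Fin m) (Fin m) ℍ[ℝ] → ℍ[ℝ]
  | 0, _ => 1
  | _ + 1, A => rdet A 0

/-- The principal submatrix of `M` with rows and columns indexed by `β`. -/
def principalSub {n : ℕ} (M : Matrix (Fin n) (Fin n) ℍ[ℝ]) (β : Finset (Fin n)) :
    Matrix (Fin β.card) (Fin β.card) ℍ[ℝ] :=
  M.submatrix (⇑(β.orderEmbOfFin rfl)) (⇑(β.orderEmbOfFin rfl))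

/-- The position of `i` inside the increasing enumeration of the finset `β`. -/
def posIn {n : ℕ} (β : Finset (Fin n)) {i : Fin n} (h : i ∈ β) : Fin β.card :=
  (β.orderIsoOfFin rfl).symm ⟨i, h⟩

/-- `Σ_{β ∈ J_{s,n}{i}} cdet_i (M_β^β)`: the sum, over all subsets `β` of
cardinality `s` containing `i`, of the column determinants of the principal
submatrix `M_β^β` taken at the position of `i` within `β`. -/
def cdetPM {n : ℕ} (M : Matrix (Fin n) (Fin n) ℍ[ℝ]) (s : ℕ) (i : Fin n) : ℍ[ℝ] :=
  ∑ β ∈ ((Finset.powersetCard s (Finset.univ : Finset (Fin n))).filter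
      fun β => i ∈ β).attach,
    cdet (principalSub M β.1) (posIn β.1 (Finset.mem_filter.mp β.2).2)

/-- `Σ_{α ∈ I_{s,n}{j}} rdet_j (M_α^α)`: the sum, over all subsets `α` of
cardinality `s` containing `j`, of the row determinants of the principal
submatrix `M_α^α` taken at the position of `j` within `α`. -/
def rdetPM {n : ℕ} (M : Matrix (Fin n) (Fin n) ℍ[ℝ]) (s : ℕ) (j : Fin n) : ℍ[ℝ] :=
  ∑ α ∈ ((Finset.powersetCard s (Finset.univ : Finset (Fin n))).filter
      fun α => j ∈ α).attach,
    rdet (principalSub M α.1) (posIn α.1 (Finset.mem_filter.mp α.2).2)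

/-- The sum of all principal minors of `M` of order `r`. -/
def minorSum {n : ℕ} (M : Matrix (Fin n) (Fin n) ℍ[ℝ]) (r : ℕ) : ℍ[ℝ] :=
  ∑ β ∈ Finset.powersetCard r (Finset.univ : Finset (Fin n)),
    Hdet (principalSub M β)

/-- The (column) rank of a quaternion matrix: the dimension of the span of its
columns as a right `ℍ`-vector space. -/
def qrank {m n : ℕ} (A : Matrix (Fin m) (Fin n) ℍ[ℝ]) : ℕ :=
  Module.finrank ℍ[ℝ]ᵐᵒᵖ
    (Submodule.span ℍ[ℝ]ᵐᵒᵖ (Set.range Aᵀ) : Submodule ℍ[ℝ]ᵐᵒᵖ (Fin m → ℍ[ℝ]))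

/-- `Ind A = k`: `k` is the smallest nonnegative integer with
`rank A^(k+1) = rank A^k`. -/
def isInd {n : ℕ} (A : Matrix (Fin n) (Fin n) ℍ[ℝ]) (k : ℕ) : Prop :=
  qrank (A ^ (k + 1)) = qrank (A ^ k) ∧
    ∀ l < k, qrank (A ^ (l + 1)) ≠ qrank (A ^ l)

/-- `X` is a Drazin inverse of `A` (relative to the index `k`). -/
def isDrazin {n : ℕ} (A X : Matrix (Fin n) (Fin n) ℍ[ℝ]) (k : ℕ) : Prop :=
  A ^ (k + 1) * X = A ^ k ∧ X * A * X = X ∧ A * X = X * A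

end

section Aux

lemma perm_mem_periodicPts {n : ℕ} (σ : Equiv.Perm (Fin n)) (x : Fin n) :
    x ∈ Function.periodicPts ⇑σ := by
  refine ⟨orderOf σ, orderOf_pos σ, ?_⟩
  show (⇑σ)^[orderOf σ] x = x
  rw [Equiv.Perm.iterate_eq_pow, pow_orderOf_eq_one]
  rfl

lemma minPer_pos {n : ℕ} (σ : Equiv.Perm (Fin n)) (x : Fin n) :
    0 < Function.minimalPeriod ⇑σ x :=
  Function.minimalPeriod_pos_of_mem_periodicPts (perm_mem_periodicPts σ x)

lemma minPer_le {n : ℕ} (σ : Equiv.Perm (Fin n)) (x : Fin n) :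
    Function.minimalPeriod ⇑σ x ≤ n := by
  classical
  have h : (Finset.range (Function.minimalPeriod ⇑σ x)).card ≤
      (Finset.univ : Finset (Fin n)).card := by
    apply Finset.card_le_card_of_injOn (fun t => (⇑σ)^[t] x)
    · intro a _; exact Finset.mem_univ _
    · intro a ha b hb hab
      exact Function.iterate_injOn_Iio_minimalPeriod
        (Set.mem_Iio.mpr (Finset.mem_range.mp ha))
        (Set.mem_Iio.mpr (Finset.mem_range.mp hb)) hab
  simpa using h

/-- If some positive iterate of `x` hits `j`, then `x` is in the cycle of `j`. -/
lemma inCycle_of_iterate {n : ℕ} (σ : Equiv.Perm (Fin n)) {x j : Fin n} {t : ℕ}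
    (ht : t < Function.minimalPeriod ⇑σ x) (h : (⇑σ)^[t + 1] x = j) :
    inCycleB σ j x = true := by
  set p := Function.minimalPeriod ⇑σ x with hp
  have hs : t + 1 ≤ p := ht
  have hx : (⇑σ)^[p - (t + 1)] j = x := by
    rw [← h, ← Function.iterate_add_apply, Nat.sub_add_cancel hs]
    exact Function.iterate_minimalPeriod
  have hlt : p - (t + 1) < n := lt_of_lt_of_le
    (by omega : p - (t + 1) < p) (minPer_le σ x)
  unfold inCycleB
  rw [List.any_eq_true]
  exact ⟨p - (t + 1), List.mem_range.mpr hlt, decide_eq_true hx⟩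

lemma cycProd_update_of_not_inCycle {n : ℕ} (A : Matrix (Fin n) (Fin n) ℍ[ℝ])
    (b : ℍ[ℝ]) (σ : Equiv.Perm (Fin n)) {x j : Fin n}
    (hx : inCycleB σ j x = false) :
    cycProd (A.updateCol j fun s => A s j * b) σ x = cycProd A σ x := by
  unfold cycProd
  congr 1
  apply List.map_congr_left
  intro t ht
  have htp := List.mem_range.mp ht
  have hne : (⇑σ)^[t + 1] x ≠ j := by
    intro h
    rw [inCycle_of_iterate σ htp h] at hx
    simp at hx
  rw [Matrix.updateCol_apply, if_neg hne]

lemma cycProd_update_self {n : ℕ} (A : Matrix (Fin n) (Fin n) ℍ[ℝ])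
    (b : ℍ[ℝ]) (σ : Equiv.Perm (Fin n)) (j : Fin n) :
    cycProd (A.updateCol j fun s => A s j * b) σ j = cycProd A σ j * b := by
  unfold cycProd
  obtain ⟨m, hm⟩ : ∃ m, Function.minimalPeriod ⇑σ j = m + 1 :=
    ⟨Function.minimalPeriod ⇑σ j - 1, by have := minPer_pos σ j; omega⟩
  rw [hm, List.range_succ, List.map_append, List.map_append, List.prod_append,
    List.prod_append, List.map_singleton, List.map_singleton, List.prod_singleton,
    List.prod_singleton]
  have hlast : (⇑σ)^[m + 1] j = j := by
    rw [← hm]; exact Function.iterate_minimalPeriod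
  have hpre : ∀ t ∈ List.range m,
      (A.updateCol j fun s => A s j * b) ((⇑σ)^[t] j) ((⇑σ)^[t + 1] j)
        = A ((⇑σ)^[t] j) ((⇑σ)^[t + 1] j) := by
    intro t ht
    have htm := List.mem_range.mp ht
    have hne : (⇑σ)^[t + 1] j ≠ j := by
      intro h
      have : Function.minimalPeriod ⇑σ j ≤ t + 1 :=
        Function.IsPeriodicPt.minimalPeriod_le (Nat.succ_pos t) h
      omega
    rw [Matrix.updateCol_apply, if_neg hne]
  rw [List.map_congr_left hpre, hlast, Matrix.updateCol_self, mul_assoc]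

end Aux

/-- `cdet_j A_{.j}(a_{.j}·b) = (cdet_j A)·b`. -/
theorem stmt2 {n : ℕ} (A : Matrix (Fin n) (Fin n) ℍ[ℝ]) (b : ℍ[ℝ]) (j : Fin n) :
    cdet (A.updateCol j fun s => A s j * b) j = cdet A j * b := by
  unfold cdet
  rw [Finset.sum_mul]
  apply Finset.sum_congr rfl
  intro σ _
  have hL : ((leaders σ j).reverse).map
      (cycProd (A.updateCol j fun s => A s j * b) σ)
      = ((leaders σ j).reverse).map (cycProd A σ) := by
    apply List.map_congr_left
    intro x hx
    have hx' : x ∈ leaders σ j := List.mem_reverse.mp hx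
    have := List.mem_filter.mp hx'
    have hcyc : inCycleB σ j x = false := by
      have h2 := this.2
      rw [Bool.and_eq_true] at h2
      simpa using h2.2
    exact cycProd_update_of_not_inCycle A b σ hcyc
  rw [hL, cycProd_update_self A b σ j, ← mul_assoc, ← mul_assoc, mul_assoc _ _ (cycProd A σ j)]
end

section
/- Let A be an n×n matrix over ℍ and A* its conjugate-transpose. Then for every i ∈ {1,…,n}, rdet_i(A*) equals the quaternion conjugate of cdet_i A. -/
open Quaternion Matrix Finset

section Aux
open Function
variable {n : ℕ} (σ : Equiv.Perm (Fin n)) (x : Fin n)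

private lemma iter_cancel (s : ℕ) : (⇑σ)^[s] ((⇑σ⁻¹)^[s] x) = x := by
  rw [Equiv.Perm.iterate_eq_pow, Equiv.Perm.iterate_eq_pow, inv_pow, ← Equiv.Perm.mul_apply, mul_inv_cancel, Equiv.Perm.one_apply]

private lemma inv_iterate {s : ℕ} (hs : s ≤ minimalPeriod (⇑σ) x) :
    (⇑σ⁻¹)^[s] x = (⇑σ)^[minimalPeriod (⇑σ) x - s] x := by
  have h1 : (⇑σ)^[s] ((⇑σ⁻¹)^[s] x) = (⇑σ)^[s] ((⇑σ)^[minimalPeriod (⇑σ) x - s] x) := by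
    rw [iter_cancel, ← Function.iterate_add_apply, Nat.add_sub_cancel' hs,
      Function.iterate_minimalPeriod]
  exact (σ.injective.iterate s) h1

private lemma minimalPeriod_inv : minimalPeriod (⇑σ⁻¹) x = minimalPeriod (⇑σ) x := by
  apply Nat.dvd_antisymm
  · apply IsPeriodicPt.minimalPeriod_dvd
    show (⇑σ⁻¹)^[_] x = x
    rw [inv_iterate σ x le_rfl, Nat.sub_self, Function.iterate_zero_apply]
  · apply IsPeriodicPt.minimalPeriod_dvd
    show (⇑σ)^[_] x = x
    have h := congrArg ((⇑σ)^[minimalPeriod (⇑σ⁻¹) x])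
      (Function.iterate_minimalPeriod (f := ⇑σ⁻¹) (x := x))
    rw [iter_cancel] at h
    exact h.symm

private lemma minimalPeriod_pos' : 0 < minimalPeriod (⇑σ) x := by
  apply minimalPeriod_pos_of_mem_periodicPts
  exact ⟨orderOf σ, orderOf_pos σ, by
    show (⇑σ)^[orderOf σ] x = x
    rw [← Equiv.Perm.coe_pow, pow_orderOf_eq_one]; rfl⟩

private lemma minimalPeriod_le' : minimalPeriod (⇑σ) x ≤ n := by
  have hinj := Function.iterate_injOn_Iio_minimalPeriod (f := ⇑σ) (x := x)
  have := Finset.card_le_card_of_injOn (fun t => (⇑σ)^[t] x)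
    (fun a _ => Finset.mem_univ _)
    (fun a ha b hb hab => hinj (by simpa using ha) (by simpa using hb) hab)
    (s := Finset.range (minimalPeriod (⇑σ) x))
  simpa using this

private lemma iter_inv_shift (t : ℕ) : ∃ s ≤ minimalPeriod (⇑σ) x, s < n ∧
    (⇑σ⁻¹)^[t] x = (⇑σ)^[s] x := by
  set c := minimalPeriod (⇑σ) x with hc
  have hcpos := minimalPeriod_pos' σ x
  have hcle := minimalPeriod_le' σ x
  have h1 : (⇑σ⁻¹)^[t] x = (⇑σ⁻¹)^[t % c] x := by
    rw [← Function.iterate_mod_minimalPeriod_eq (f := ⇑σ⁻¹), minimalPeriod_inv]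
  have h2 : t % c ≤ c := le_of_lt (Nat.mod_lt _ hcpos)
  rcases Nat.eq_zero_or_pos (t % c) with h | h
  · exact ⟨0, Nat.zero_le _, by omega, by rw [h1, h, Function.iterate_zero_apply,
      Function.iterate_zero_apply]⟩
  · exact ⟨c - t % c, Nat.sub_le _ _, by omega, by rw [h1, inv_iterate σ x h2]⟩

private lemma iter_shift (t : ℕ) : ∃ s < n, (⇑σ)^[t] x = (⇑σ)^[s] x :=
  ⟨t % minimalPeriod (⇑σ) x,
   lt_of_lt_of_le (Nat.mod_lt _ (minimalPeriod_pos' σ x)) (minimalPeriod_le' σ x),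
   (Function.iterate_mod_minimalPeriod_eq).symm⟩

private lemma isLeaderB_iff : isLeaderB σ x = true ↔ ∀ t, x ≤ (⇑σ)^[t] x := by
  simp only [isLeaderB, List.all_eq_true, List.mem_range, decide_eq_true_eq]
  exact ⟨fun h t => by obtain ⟨s, hs, hEq⟩ := iter_shift σ x t; rw [hEq]; exact h s hs,
    fun h t _ => h t⟩

private lemma isLeaderB_inv : isLeaderB σ⁻¹ x = isLeaderB σ x := by
  have : isLeaderB σ⁻¹ x = true ↔ isLeaderB σ x = true := by
    rw [isLeaderB_iff, isLeaderB_iff]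
    constructor
    · intro h t
      obtain ⟨s, _, _, hEq⟩ := iter_inv_shift σ⁻¹ x t
      rw [inv_inv] at hEq; rw [hEq]; exact h s
    · intro h t
      obtain ⟨s, _, _, hEq⟩ := iter_inv_shift σ x t
      rw [hEq]; exact h s
  exact Bool.coe_iff_coe.mp this

private lemma inCycleB_iff (i : Fin n) : inCycleB σ i x = true ↔ ∃ t, (⇑σ)^[t] i = x := by
  simp only [inCycleB, List.any_eq_true, List.mem_range, decide_eq_true_eq]
  constructor
  · rintro ⟨t, _, h⟩; exact ⟨t, h⟩
  · rintro ⟨t, h⟩; obtain ⟨s, hs, hEq⟩ := iter_shift σ i t; exact ⟨s, hs, by rw [← hEq]; exact h⟩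

private lemma inCycleB_inv (i : Fin n) : inCycleB σ⁻¹ i x = inCycleB σ i x := by
  have : inCycleB σ⁻¹ i x = true ↔ inCycleB σ i x = true := by
    rw [inCycleB_iff, inCycleB_iff]
    constructor
    · rintro ⟨t, h⟩
      obtain ⟨s, _, _, hEq⟩ := iter_inv_shift σ i t
      exact ⟨s, by rw [← hEq]; exact h⟩
    · rintro ⟨t, h⟩
      obtain ⟨s, _, _, hEq⟩ := iter_inv_shift σ⁻¹ i t
      rw [inv_inv] at hEq
      exact ⟨s, by rw [← hEq]; exact h⟩
  exact Bool.coe_iff_coe.mp this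

private lemma leaders_inv (i : Fin n) : leaders σ⁻¹ i = leaders σ i := by
  simp only [leaders, isLeaderB_inv, inCycleB_inv]

private lemma star_list_prod (l : List ℍ[ℝ]) : star l.prod = (l.reverse.map star).prod := by
  induction l with
  | nil => simp
  | cons a l ih => simp [StarMul.star_mul, ih]

private lemma cycProd_conjTranspose (A : Matrix (Fin n) (Fin n) ℍ[ℝ]) :
    cycProd Aᴴ σ x = star (cycProd A σ⁻¹ x) := by
  unfold cycProd
  rw [star_list_prod]
  congr 1
  rw [← List.map_reverse, List.map_map]
  apply List.ext_getElem
  · simp [minimalPeriod_inv]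
    exact (minimalPeriod_inv σ x).symm
  · intro t h1 h2
    set c := Function.minimalPeriod (⇑σ) x with hc
    simp only [List.length_map, List.length_range] at h1
    simp only [List.getElem_map, List.getElem_reverse, List.getElem_range,
      List.length_map, List.length_range, Function.comp_apply, minimalPeriod_inv]
    have hlt : t < c := h1
    have e1 : (⇑σ⁻¹)^[c - 1 - t] x = (⇑σ)^[t + 1] x := by
      rw [inv_iterate σ x (by omega)]; congr 1; omega
    have e2 : (⇑σ⁻¹)^[c - 1 - t + 1] x = (⇑σ)^[t] x := by
      rw [inv_iterate σ x (by omega)]; congr 1; omega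
    rw [e1, e2]
    rfl

end Aux

/-- `rdet_i (A*) = conj (cdet_i A)`. -/
theorem stmt3 {n : ℕ} (A : Matrix (Fin n) (Fin n) ℍ[ℝ]) (i : Fin n) :
    rdet Aᴴ i = star (cdet A i) := by
  rw [rdet, cdet, star_sum]
  refine Fintype.sum_equiv (Equiv.inv (Equiv.Perm (Fin n))) _ _ fun σ => ?_
  simp only [Equiv.inv_apply]
  rw [StarMul.star_mul, StarMul.star_mul, star_intCast, Equiv.Perm.sign_inv]
  have hQ : star (cycProd A σ⁻¹ i) = cycProd Aᴴ σ i := (cycProd_conjTranspose σ i A).symm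
  have hP : star (((leaders σ⁻¹ i).reverse.map (cycProd A σ⁻¹)).prod)
      = ((leaders σ i).map (cycProd Aᴴ σ)).prod := by
    simp only [star_list_prod, List.map_reverse, List.reverse_reverse, List.map_map, leaders_inv]
    exact congrArg List.prod (List.map_congr_left fun y _ => (cycProd_conjTranspose σ y A).symm)
  rw [hQ, hP]
  exact ((Int.cast_commute ((Equiv.Perm.sign σ : ℤ)) _).eq)
end
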